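/- Let Q be a multiplicative lattice in which 1 is compact. Then 1 is completely strongly hollow if and only if Q is quasi-local (has a unique maximal element). -/

import Mathlib

/-- A multiplicative lattice: a complete lattice with a commutative, associative
multiplication distributing over arbitrary joins, with the top element as identity. -/
class MulLattice (Q : Type*) extends CompleteLattice Q, CommMonoid Q where
  mul_sSup : ∀ (a : Q) (s : Set Q), a * sSup s = ⨆ x ∈ s, a * x
  one_eq_top : (1 : Q) = ⊤

/-- The December 2024 Mathlib meaning of `CompleteLattice.IsCompactElement`. -/
def CompleteLattice.IsCompactElement {α : Type*} [CompleteLattice α] (k : α) :=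
  ∀ s : Set α, k ≤ sSup s → ∃ t : Finset α, ↑t ⊆ s ∧ k ≤ t.sup id

section OrderDefs
variable {Q : Type*} [CompleteLattice Q]

/-- `a` is strongly hollow if `a ≤ j ⊔ k` implies `a ≤ j` or `a ≤ k`. -/
def StronglyHollow (a : Q) : Prop := ∀ j k : Q, a ≤ j ⊔ k → a ≤ j ∨ a ≤ k

/-- `a` is completely strongly hollow if whenever `a` is below an arbitrary join,
it is below one of the joinands. -/
def CompletelyStronglyHollow (a : Q) : Prop :=
  ∀ s : Set Q, a ≤ sSup s → ∃ x ∈ s, a ≤ x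

/-- `κ(a)` is the join of all elements not above `a`. -/
def kappa (a : Q) : Q := sSup {k : Q | ¬ a ≤ k}

end OrderDefs

/-- The mlResidual `(a : b)`. -/
def mlResidual {Q : Type*} [MulLattice Q] (a b : Q) : Q := sSup {x : Q | x * b ≤ a}

theorem stmt5 {Q : Type*} [MulLattice Q]
    (hc : CompleteLattice.IsCompactElement (1 : Q))
    (hmax : ∀ x : Q, x ≠ ⊤ → ∃ m : Q, IsCoatom m ∧ x ≤ m)
    (hjoin : ∀ m n : Q, IsCoatom m → IsCoatom n → m ≠ n → m ⊔ n = ⊤) :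
    CompletelyStronglyHollow (1 : Q) ↔ (∃! m : Q, IsCoatom m) := by
  rw [MulLattice.one_eq_top]
  constructor
  · intro h
    have hbot : (⊥ : Q) ≠ ⊤ := by
      intro hb
      obtain ⟨x, hx, -⟩ := h ∅ (by rw [sSup_empty, ← hb])
      exact hx
    obtain ⟨m, hm, -⟩ := hmax ⊥ hbot
    refine ⟨m, hm, fun n hn => ?_⟩
    by_contra hne
    have : (⊤ : Q) ≤ sSup {n, m} := by
      rw [sSup_pair, hjoin n m hn hm hne]
    obtain ⟨x, hx, hlx⟩ := h _ this
    have hxt := top_le_iff.mp hlx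
    rcases hx with rfl | rfl
    · exact hn.1 hxt
    · exact hm.1 hxt
  · rintro ⟨m, hm, hu⟩ s hs
    obtain ⟨t, hts, ht⟩ := hc s (by rw [MulLattice.one_eq_top]; exact hs)
    rw [MulLattice.one_eq_top] at ht
    by_cases htop : ∃ x ∈ t, x = ⊤
    · obtain ⟨x, hx, hxt⟩ := htop
      exact ⟨x, hts hx, hxt ▸ le_rfl⟩
    · push_neg at htop
      exfalso
      have : t.sup id ≤ m := Finset.sup_le fun x hx => by
        obtain ⟨n, hn, hxn⟩ := hmax x (htop x hx)
        rwa [hu n hn] at hxn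
      exact hm.1 (top_le_iff.mp (le_trans ht this))
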